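/- Every symmetric inductive *-semiring satisfies 1*·a = a·1* for all a. -/
import Mathlib

/-- Every symmetric inductive `*`-semiring satisfies `1*·a = a·1*`. -/
theorem stmt_15 {S : Type*} [Semiring S] [PartialOrder S] (star : S → S)
    (haddmono : ∀ a b c d : S, a ≤ b → c ≤ d → a + c ≤ b + d)
    (hmulmono : ∀ a b c d : S, a ≤ b → c ≤ d → a * c ≤ b * d)
    (hfix : ∀ a : S, a * star a + 1 ≤ star a)
    (hind : ∀ a b x : S, a * x + b ≤ x → star a * b ≤ x)
    (hsymind : ∀ a b x : S, x * a + b ≤ x → b * star a ≤ x) :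
    ∀ a : S, star 1 * a = a * star 1 := by
  intro a
  have h1 : star 1 + 1 ≤ star 1 := by
    have := hfix 1; rwa [one_mul] at this
  have le1 : star 1 * a ≤ a * star 1 := by
    apply hind
    calc 1 * (a * star 1) + a = a * (star 1 + 1) := by noncomm_ring
      _ ≤ a * star 1 := hmulmono a a _ _ le_rfl h1
  have le2 : a * star 1 ≤ star 1 * a := by
    apply hsymind
    calc (star 1 * a) * 1 + a = (star 1 + 1) * a := by noncomm_ring
      _ ≤ star 1 * a := hmulmono _ _ a a h1 le_rfl
  exact le_antisymm le1 le2
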